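/- Fix q ∈ (1,∞), K ∈ [1,∞) and, for each i ∈ ℕ, let f_i : ℝ → ℝ be K-Lipschitz continuous with |f_i(0)| ≤ K. Define g_d : ℝ^d → ℝ by g_d(x) = Σ_{i=1}^d f_i(x_i). Then for every d ∈ ℕ and ε ∈ (0,1] there exists a skeleton φ with ReLU-realization R_ReLU(φ) : ℝ^d → ℝ such that: 1) sup_{x∈ℝ^d} (1+‖x‖^q)^{−1}·|g_d(x) − R_ReLU(φ)(x)| ≤ ε; 2) R_ReLU(φ) is √d·K-Lipschitz on ℝ^d; 3) P(φ) ≤ (2/9)·10³·2^{3t(q+1)}·K^{2t(q+1)}·d^{t(q+1)+4}·ε^{−t}, where t = q/(q−1). -/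

import Mathlib

open scoped BigOperators ENNReal

noncomputable section

/-- The rectified linear unit activation function. -/
def ReLU (x : ℝ) : ℝ := max x 0

/-- Truncation of a real sequence to its first `n` entries. -/
def trunc (n : ℕ) (x : ℕ → ℝ) : ℕ → ℝ := fun j => if j < n then x j else 0

/-- Embedding of a Euclidean vector into the space of real sequences. -/
def emb (n : ℕ) (x : EuclideanSpace ℝ (Fin n)) : ℕ → ℝ :=
  fun j => if h : j < n then x ⟨j, h⟩ else 0

/-- A neural network skeleton of depth `Dm + 1`.  The layer dimensions are
`l 0, …, l (Dm + 1)`; the weight matrix of layer `k + 1` is `V k` (a matrix of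
size `l (k+1) × l k`, stored as a doubly indexed sequence) and its bias is `b k`.
Entries beyond the relevant ranges are irrelevant junk. -/
structure NN where
  Dm : ℕ
  l : ℕ → ℕ
  V : ℕ → ℕ → ℕ → ℝ
  b : ℕ → ℕ → ℝ

namespace NN

/-- Depth `D(φ)` of a skeleton. -/
def depth (φ : NN) : ℕ := φ.Dm + 1

/-- Number of parameters `P(φ) = ∑_{k=1}^{D} l_k (l_{k-1} + 1)`. -/
def P (φ : NN) : ℕ := ∑ k ∈ Finset.range φ.depth, φ.l (k + 1) * (φ.l k + 1)

/-- The affine map `A_{k+1}(x) = V_{k+1} x + b_{k+1}` of a skeleton. -/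
def aff (φ : NN) (k : ℕ) (x : ℕ → ℝ) : ℕ → ℝ :=
  fun i => (∑ j ∈ Finset.range (φ.l k), φ.V k i j * x j) + φ.b k i

/-- State after `k` layers, with the activation applied after each affine map. -/
def hidden (a : ℝ → ℝ) (φ : NN) : ℕ → (ℕ → ℝ) → ℕ → ℝ
  | 0 => fun x => x
  | k + 1 => fun x i => a (φ.aff k (φ.hidden a k x) i)

/-- The `a`-realization `R_a(φ) = A_D ∘ a ∘ A_{D-1} ∘ ⋯ ∘ a ∘ A_1`, acting on
sequences (only the first `l 0` input coordinates and the first `l D` output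
coordinates are meaningful). -/
def fullReal (a : ℝ → ℝ) (φ : NN) (x : ℕ → ℝ) : ℕ → ℝ :=
  φ.aff φ.Dm (φ.hidden a φ.Dm (trunc (φ.l 0) x))

/-- The `a`-realization as a map `ℝ^m → ℝ^n` (meaningful when `l 0 = m` and
`l D = n`). -/
def realAs (a : ℝ → ℝ) (φ : NN) (m n : ℕ) (x : EuclideanSpace ℝ (Fin m)) :
    EuclideanSpace ℝ (Fin n) :=
  WithLp.toLp 2 fun i => φ.fullReal a (emb m x) i

/-- The `a`-realization as a scalar-valued map `ℝ^m → ℝ`. -/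
def realScalar (a : ℝ → ℝ) (φ : NN) (m : ℕ) (x : EuclideanSpace ℝ (Fin m)) : ℝ :=
  φ.fullReal a (emb m x) 0

/-- The `a`-realization as a map `ℝ → ℝ`. -/
def real1 (a : ℝ → ℝ) (φ : NN) (x : ℝ) : ℝ :=
  φ.fullReal a (fun j => if j = 0 then x else 0) 0

/-- Concatenation `ψ ∘ φ` of two skeletons (meaningful when
`l_{D(φ)}(φ) = l_0(ψ)`). -/
def comp (ψ φ : NN) : NN where
  Dm := φ.Dm + ψ.Dm
  l := fun k => if k < φ.depth then φ.l k else ψ.l (k + 1 - φ.depth)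
  V := fun k =>
    if k < φ.Dm then φ.V k
    else if k = φ.Dm then fun i j => ∑ m ∈ Finset.range (ψ.l 0), ψ.V 0 i m * φ.V φ.Dm m j
    else ψ.V (k - φ.Dm)
  b := fun k =>
    if k < φ.Dm then φ.b k
    else if k = φ.Dm then
      fun i => (∑ m ∈ Finset.range (ψ.l 0), ψ.V 0 i m * φ.b φ.Dm m) + ψ.b 0 i
    else ψ.b (k - φ.Dm)

/-- Offset of the `q`-th block in layer `k` of a parallelization. -/
def poff (ν : ℕ → NN) (k q : ℕ) : ℕ := ∑ j ∈ Finset.range q, (ν j).l k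

/-- Parallelization `p(φ_1, …, φ_n)` of `n` skeletons (meaningful when they all
have the same depth): block-diagonal weight matrices and concatenated biases. -/
def parallel (n : ℕ) (ν : ℕ → NN) : NN where
  Dm := (ν 0).Dm
  l := fun k => ∑ j ∈ Finset.range n, (ν j).l k
  V := fun k i j =>
    ∑ q ∈ Finset.range n,
      if poff ν (k + 1) q ≤ i ∧ i < poff ν (k + 1) q + (ν q).l (k + 1) ∧
          poff ν k q ≤ j ∧ j < poff ν k q + (ν q).l k then
        (ν q).V k (i - poff ν (k + 1) q) (j - poff ν k q)
      else 0
  b := fun k i =>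
    ∑ q ∈ Finset.range n,
      if poff ν (k + 1) q ≤ i ∧ i < poff ν (k + 1) q + (ν q).l (k + 1) then
        (ν q).b k (i - poff ν (k + 1) q)
      else 0

/-- The activation `a` fulfills the `c`-identity requirement, witnessed by the
skeleton `I`: `I` has depth 2, input and output dimension 1, hidden dimension
at most `c`, and its `a`-realization is the identity on `ℝ`. -/
def IdReq (a : ℝ → ℝ) (c : ℝ) (I : NN) : Prop :=
  I.Dm = 1 ∧ I.l 0 = 1 ∧ I.l 2 = 1 ∧ (I.l 1 : ℝ) ≤ c ∧
    ∀ x : ℕ → ℝ, I.fullReal a x 0 = x 0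

/-- The `d`-fold parallelization `I_d` of an identity skeleton. -/
def Idn (I : NN) (d : ℕ) : NN := parallel d fun _ => I

/-- Concatenate `m` identity networks after `φ`. -/
def padAfter (I φ : NN) : ℕ → NN
  | 0 => φ
  | m + 1 => comp (Idn I ((padAfter I φ m).l (padAfter I φ m).depth)) (padAfter I φ m)

/-- Concatenate `m` identity networks in front of `φ`. -/
def padBefore (I φ : NN) : ℕ → NN
  | 0 => φ
  | m + 1 => comp (padBefore I φ m) (Idn I ((padBefore I φ m).l 0))

/-- Diagonal ("staggered") parallelization `p_I(φ_1, …, φ_n)` of arbitrary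
skeletons, obtained by padding each `φ_q` with identity networks so that all
have equal depth and then parallelizing. -/
def dpar (I : NN) (n : ℕ) (ν : ℕ → NN) : NN :=
  parallel n fun q =>
    padAfter I (padBefore I (ν q) (∑ j ∈ Finset.range q, (ν j).depth))
      (∑ j ∈ Finset.Ico (q + 1) n, (ν j).depth)

end NN


namespace P74

lemma min_sub_min_le {u v : ℝ} (c : ℝ) (h : v ≤ u) : min u c - min v c ≤ u - v := by
  simp only [min_def]; split_ifs <;> linarith

lemma min_sub_min_nonneg {u v : ℝ} (c : ℝ) (h : v ≤ u) : 0 ≤ min u c - min v c := by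
  simp only [min_def]; split_ifs <;> linarith

lemma min_sub_min_mono {u v c c' : ℝ} (h : v ≤ u) (hc : c ≤ c') :
    min u c - min v c ≤ min u c' - min v c' := by
  simp only [min_def]; split_ifs <;> linarith

noncomputable section

/-- grid points -/
def g (R : ℝ) (N : ℕ) (m : ℕ) : ℝ := -R + m * (2 * R / N)

/-- slopes -/
def s (f : ℝ → ℝ) (R : ℝ) (N : ℕ) (m : ℕ) : ℝ := (f (g R N (m + 1)) - f (g R N m)) / (2 * R / N)

/-- piecewise linear interpolant -/
def F (f : ℝ → ℝ) (R : ℝ) (N : ℕ) (u : ℝ) : ℝ :=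
  f (-R) + ∑ m ∈ Finset.range N, s f R N m * (min u (g R N (m + 1)) - min u (g R N m))

variable {f : ℝ → ℝ} {K R : ℝ} {N : ℕ}

lemma hpos (hR : 0 < R) (hN : 1 ≤ N) : 0 < 2 * R / N := by
  have h : (0:ℝ) < N := by exact_mod_cast hN
  positivity

lemma g_succ (m : ℕ) : g R N (m + 1) = g R N m + 2 * R / N := by
  simp only [g]; push_cast; ring

lemma g_mono (hR : 0 < R) (hN : 1 ≤ N) {m m' : ℕ} (h : m ≤ m') : g R N m ≤ g R N m' := by
  have hh := hpos hR hN
  have : (m:ℝ) * (2 * R / N) ≤ (m':ℝ) * (2 * R / N) :=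
    mul_le_mul_of_nonneg_right (by exact_mod_cast h) hh.le
  simp only [g]; linarith

lemma g_zero : g R N 0 = -R := by simp [g]

lemma g_last (hR : 0 < R) (hN : 1 ≤ N) : g R N N = R := by
  have hN0 : (0:ℝ) < N := by exact_mod_cast hN
  have : (N:ℝ) * (2 * R / N) = 2 * R := by rw [mul_comm, div_mul_cancel₀ _ hN0.ne']
  simp only [g]; linarith

lemma K_nonneg (hLip : ∀ x y : ℝ, |f x - f y| ≤ K * |x - y|) : 0 ≤ K := by
  have h := hLip 1 0
  simp only [sub_zero, abs_one, mul_one] at h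
  exact le_trans (abs_nonneg _) h

lemma s_abs_le (hR : 0 < R) (hN : 1 ≤ N)
    (hLip : ∀ x y : ℝ, |f x - f y| ≤ K * |x - y|) (m : ℕ) : |s f R N m| ≤ K := by
  have hh := hpos hR hN
  have h1 := hLip (g R N (m + 1)) (g R N m)
  rw [g_succ] at h1
  rw [show g R N m + 2 * R / N - g R N m = 2 * R / N by ring, abs_of_pos hh] at h1
  rw [s, abs_div, abs_of_pos hh, div_le_iff₀ hh, g_succ]
  linarith

/-- Lipschitz continuity of the interpolant. -/
lemma F_lip_of_le (hR : 0 < R) (hN : 1 ≤ N)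
    (hLip : ∀ x y : ℝ, |f x - f y| ≤ K * |x - y|)
    {u v : ℝ} (hvu : v ≤ u) : |F f R N u - F f R N v| ≤ K * (u - v) := by
  have hK := K_nonneg hLip
  have hsum : F f R N u - F f R N v = ∑ m ∈ Finset.range N,
      s f R N m * ((min u (g R N (m+1)) - min v (g R N (m+1))) - (min u (g R N m) - min v (g R N m))) := by
    simp only [F, ← Finset.sum_sub_distrib]
    rw [add_sub_add_left_eq_sub, ← Finset.sum_sub_distrib]
    exact Finset.sum_congr rfl fun m _ => by ring
  rw [hsum]
  calc |∑ m ∈ Finset.range N, s f R N m *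
        ((min u (g R N (m+1)) - min v (g R N (m+1))) - (min u (g R N m) - min v (g R N m)))|
      ≤ ∑ m ∈ Finset.range N, K *
        ((min u (g R N (m+1)) - min v (g R N (m+1))) - (min u (g R N m) - min v (g R N m))) := by
        refine (Finset.abs_sum_le_sum_abs _ _).trans (Finset.sum_le_sum fun m _ => ?_)
        rw [abs_mul]
        have hmono : min u (g R N m) - min v (g R N m) ≤ min u (g R N (m+1)) - min v (g R N (m+1)) :=
          min_sub_min_mono hvu (g_mono hR hN (Nat.le_succ m))
        have h0 := min_sub_min_nonneg (g R N m) hvu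
        rw [abs_of_nonneg (show (0:ℝ) ≤ min u (g R N (m+1)) - min v (g R N (m+1)) - (min u (g R N m) - min v (g R N m)) by linarith)]
        exact mul_le_mul_of_nonneg_right (s_abs_le hR hN hLip m) (by linarith)
    _ = K * ((min u (g R N N) - min v (g R N N)) - (min u (g R N 0) - min v (g R N 0))) := by
        rw [← Finset.mul_sum, Finset.sum_range_sub (fun m => min u (g R N m) - min v (g R N m))]
    _ ≤ K * (u - v) := by
        apply mul_le_mul_of_nonneg_left _ hK
        have h1 := min_sub_min_le (g R N N) hvu
        have h2 := min_sub_min_nonneg (g R N 0) hvu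
        linarith

lemma F_lip (hR : 0 < R) (hN : 1 ≤ N)
    (hLip : ∀ x y : ℝ, |f x - f y| ≤ K * |x - y|)
    (u v : ℝ) : |F f R N u - F f R N v| ≤ K * |u - v| := by
  rcases le_total v u with h | h
  · rw [abs_of_nonneg (sub_nonneg.mpr h)]; exact F_lip_of_le hR hN hLip h
  · rw [abs_sub_comm u v, abs_of_nonneg (sub_nonneg.mpr h)]
    rw [abs_sub_comm]; exact F_lip_of_le hR hN hLip h

/-- value at the right end -/
lemma F_at_right (hR : 0 < R) (hN : 1 ≤ N) {u : ℝ} (hu : R ≤ u) :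
    F f R N u = f R := by
  have hh := hpos hR hN
  have hmin : ∀ m : ℕ, m ≤ N → min u (g R N m) = g R N m := fun m hm =>
    min_eq_right (le_trans (le_trans (g_mono hR hN hm) (g_last hR hN).le) hu)
  have : ∀ m ∈ Finset.range N,
      s f R N m * (min u (g R N (m+1)) - min u (g R N m))
        = f (g R N (m+1)) - f (g R N m) := by
    intro m hm
    rw [Finset.mem_range] at hm
    have hd : g R N (m+1) - g R N m = 2 * R / N := by rw [g_succ]; ring
    rw [hmin m hm.le, hmin (m+1) hm, hd]
    simp only [s]
    rw [div_mul_cancel₀ _ (ne_of_gt hh)]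
  rw [F, Finset.sum_congr rfl this, Finset.sum_range_sub (fun m => f (g R N m)),
    g_last hR hN, g_zero]
  ring

lemma F_at_left (hR : 0 < R) (hN : 1 ≤ N) {u : ℝ} (hu : u ≤ -R) :
    F f R N u = f (-R) := by
  have hmin : ∀ m : ℕ, min u (g R N m) = u := fun m =>
    min_eq_left (le_trans hu (by rw [← g_zero (R := R) (N := N)]; exact g_mono hR hN (Nat.zero_le m)))
  simp only [F, hmin, sub_self, mul_zero, Finset.sum_const_zero, add_zero]

/-- the approximation bound -/
lemma F_approx (hR : 0 < R) (hN : 1 ≤ N)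
    (hLip : ∀ x y : ℝ, |f x - f y| ≤ K * |x - y|) (u : ℝ) :
    |F f R N u - f u| ≤ 2 * K * (2 * R / N) + K * max (|u| - R) 0 := by
  have hh := hpos hR hN
  have hK := K_nonneg hLip
  rcases le_or_gt u (-R) with hu | hu
  · -- u ≤ -R
    rw [F_at_left hR hN hu]
    have h1 := hLip (-R) u
    have h2 : |(-R) - u| = -R - u := abs_of_nonneg (by linarith)
    have h3 : max (|u| - R) 0 = -u - R := by
      rw [max_eq_left] <;> rw [abs_of_nonpos (by linarith)] <;> linarith
    rw [h3]; rw [h2] at h1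
    have h4 : 0 ≤ 2 * K * (2 * R / N) := by positivity
    linarith
  · rcases le_or_gt R u with hu2 | hu2
    · -- R ≤ u
      rw [F_at_right hR hN hu2]
      have h1 := hLip R u
      have h2 : |R - u| = u - R := by rw [abs_sub_comm]; exact abs_of_nonneg (by linarith)
      have h3 : max (|u| - R) 0 = u - R := by
        rw [max_eq_left] <;> rw [abs_of_nonneg (by linarith)] <;> linarith
      rw [h3]; rw [h2] at h1
      nlinarith
    · -- -R < u < R
      have h3 : max (|u| - R) 0 = 0 := by
        rw [max_eq_right]
        rcases le_or_gt 0 u with h | h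
        · rw [abs_of_nonneg h]; linarith
        · rw [abs_of_neg h]; linarith
      rw [h3, mul_zero, add_zero]
      -- locate the interval
      set k : ℕ := min ⌊(u + R) / (2 * R / N)⌋₊ (N - 1) with hkdef
      have hkN : k < N := lt_of_le_of_lt (min_le_right _ _) (by omega)
      have hgk : g R N k ≤ u := by
        have h0 : (k:ℝ) ≤ (⌊(u + R) / (2 * R / N)⌋₊ : ℝ) := by exact_mod_cast min_le_left _ _
        have h1 : (k : ℝ) ≤ (u + R) / (2 * R / N) :=
          h0.trans (Nat.floor_le (div_nonneg (by linarith) hh.le))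
        have h2 : (k : ℝ) * (2 * R / N) ≤ u + R := by
          rw [← le_div_iff₀ hh]; exact h1
        simp only [g]; linarith
      have hgk1 : u ≤ g R N (k + 1) := by
        rcases le_or_gt ⌊(u + R) / (2 * R / N)⌋₊ (N - 1) with hc | hc
        · have hk' : k = ⌊(u + R) / (2 * R / N)⌋₊ := by omega
          have h1 : (u + R) / (2 * R / N) < (k:ℝ) + 1 := by
            rw [hk']; exact Nat.lt_floor_add_one _
          have h2 : u + R < ((k : ℝ) + 1) * (2 * R / N) := by
            rw [← div_lt_iff₀ hh]; exact h1
          simp only [g]; push_cast; linarith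
        · have hk' : k + 1 = N := by omega
          rw [hk', g_last hR hN]; linarith
      -- telescoping of f
      have htel : f u - f (-R) =
          ∑ m ∈ Finset.range N, (f (min u (g R N (m+1))) - f (min u (g R N m))) := by
        rw [Finset.sum_range_sub (fun m => f (min u (g R N m))), g_zero, g_last hR hN,
          min_eq_left hu2.le, min_eq_right hu.le]
      have hsplit : F f R N u - f u = ∑ m ∈ Finset.range N,
          (s f R N m * (min u (g R N (m+1)) - min u (g R N m))
            - (f (min u (g R N (m+1))) - f (min u (g R N m)))) := by
        rw [Finset.sum_sub_distrib, ← htel, F]; ring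
      rw [hsplit, Finset.sum_eq_single_of_mem k (Finset.mem_range.mpr hkN)]
      · -- bound the single term
        set a := min u (g R N k) with ha
        set b := min u (g R N (k+1)) with hb
        have ha' : a = g R N k := min_eq_right hgk
        have hba1 : g R N k ≤ b := le_min hgk (g_mono hR hN (Nat.le_succ k))
        have hba2 : b ≤ g R N (k+1) := min_le_right _ _
        have hbah : b - a ≤ 2 * R / N := by rw [ha', g_succ (R := R) (N := N) k] at *; linarith
        have hba0 : 0 ≤ b - a := by rw [ha']; linarith
        have h1 : |s f R N k| ≤ K := s_abs_le hR hN hLip k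
        have h2 : |f b - f a| ≤ K * (b - a) := by
          have := hLip b a; rwa [abs_of_nonneg hba0] at this
        calc |s f R N k * (b - a) - (f b - f a)|
            ≤ |s f R N k * (b - a)| + |f b - f a| := abs_sub _ _
          _ ≤ K * (b - a) + K * (b - a) := by
              rw [abs_mul, abs_of_nonneg hba0]
              exact add_le_add (mul_le_mul_of_nonneg_right h1 hba0) h2
          _ ≤ 2 * K * (2 * R / N) := by nlinarith
      · -- other terms vanish
        intro m hm hne
        rw [Finset.mem_range] at hm
        rcases lt_or_gt_of_ne hne with hlt | hgt
        · -- m < k : both mins saturate at grid points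
          have hm1 : g R N (m+1) ≤ u := le_trans (g_mono hR hN (by omega)) hgk
          have hm0 : g R N m ≤ u := le_trans (g_mono hR hN (by omega)) hgk
          have hd : g R N (m+1) - g R N m = 2 * R / N := by rw [g_succ]; ring
          rw [min_eq_right hm1, min_eq_right hm0, hd]
          simp only [s, hd]
          rw [div_mul_cancel₀ _ (ne_of_gt hh)]
          ring
        · -- m > k : both mins equal u
          have hm1 : u ≤ g R N m := le_trans hgk1 (g_mono hR hN (by omega))
          have hm2 : u ≤ g R N (m+1) := le_trans hgk1 (g_mono hR hN (by omega))
          rw [min_eq_left hm1, min_eq_left hm2]; ring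


def net (d N : ℕ) (w t : ℕ → ℝ) (B : ℝ) : NN where
  Dm := 1
  l := fun k => if k = 0 then d else if k = 1 then d * (2 * N) else 1
  V := fun k i j => if k = 0 then (if j = i / (2 * N) then 1 else 0) else if i = 0 then w j else 0
  b := fun k i => if k = 0 then -(t i) else if i = 0 then B else 0

variable {d N : ℕ} {w t : ℕ → ℝ} {B : ℝ}

lemma net_l0 : (net d N w t B).l 0 = d := rfl
lemma net_depth : (net d N w t B).depth = 2 := rfl
lemma net_lD : (net d N w t B).l 2 = 1 := rfl

lemma net_P : (net d N w t B).P = d * (2 * N) * (d + 1) + (d * (2 * N) + 1) := by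
  simp [NN.P, NN.depth, net, Finset.sum_range_succ]

lemma net_real (hN : 0 < N) (y : ℕ → ℝ) :
    (net d N w t B).fullReal ReLU y 0
      = (∑ j ∈ Finset.range (d * (2 * N)), w j * ReLU (trunc d y (j / (2 * N)) - t j)) + B := by
  simp only [NN.fullReal, NN.hidden, NN.aff, net]
  norm_num
  refine Finset.sum_congr rfl fun j hj => ?_
  rw [Finset.mem_range] at hj
  have hjd : j / (2 * N) < d := by
    rw [Nat.div_lt_iff_lt_mul (by omega)]; omega
  congr 1
  simp only [ite_mul, one_mul, zero_mul, Finset.sum_ite_eq', Finset.mem_range, hjd, if_true]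
  ring_nf

lemma relu_sub_min (u c : ℝ) : ReLU (u - c) = u - min u c := by
  unfold ReLU
  rcases le_total u c with h | h
  · rw [min_eq_left h, max_eq_right (by linarith)]; ring
  · rw [min_eq_right h, max_eq_left (by linarith)]

lemma sum_range_mul' (M D : ℕ) (φ : ℕ → ℝ) :
    ∑ j ∈ Finset.range (D * M), φ j
      = ∑ k ∈ Finset.range D, ∑ r ∈ Finset.range M, φ (k * M + r) := by
  induction D with
  | zero => simp
  | succ D ih =>
    rw [Nat.succ_mul, Finset.sum_range_add, ih, Finset.sum_range_succ]


lemma net_sum_eq {N : ℕ} (hN : 0 < N) (f : ℕ → ℝ → ℝ) (R : ℝ) (d : ℕ) (y : ℕ → ℝ) :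
    (∑ j ∈ Finset.range (d * (2 * N)),
        ((if j % 2 = 0 then (1:ℝ) else -1) * s (f (j / (2 * N))) R N (j % (2 * N) / 2))
          * ReLU (y (j / (2 * N)) - g R N (j % (2 * N) / 2 + j % 2)))
      = ∑ k ∈ Finset.range d, (F (f k) R N (y k) - f k (-R)) := by
  rw [sum_range_mul' (2 * N) d]
  refine Finset.sum_congr rfl fun k hk => ?_
  rw [show 2 * N = N * 2 from mul_comm 2 N, sum_range_mul' 2 N]
  have ediv : ∀ r : ℕ, r < N * 2 → (k * (N * 2) + r) / (N * 2) = k := by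
    intro r hr
    rw [mul_comm k, Nat.mul_add_div (by omega), Nat.div_eq_of_lt hr, add_zero]
  have emod : ∀ r : ℕ, r < N * 2 → (k * (N * 2) + r) % (N * 2) = r := by
    intro r hr
    rw [mul_comm k, Nat.mul_add_mod, Nat.mod_eq_of_lt hr]
  have emod2 : ∀ m p : ℕ, (k * (N * 2) + (m * 2 + p)) % 2 = p % 2 := by
    intro m p
    rw [show k * (N * 2) + (m * 2 + p) = 2 * (k * N + m) + p by ring, Nat.mul_add_mod]
  have hF : F (f k) R N (y k) - f k (-R)
      = ∑ m ∈ Finset.range N, s (f k) R N m * (min (y k) (g R N (m + 1)) - min (y k) (g R N m)) := by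
    rw [F]; ring
  rw [hF]
  refine Finset.sum_congr rfl fun m hm => ?_
  rw [Finset.mem_range] at hm
  rw [Finset.sum_range_succ, Finset.sum_range_one]
  have h0 : m * 2 + 0 < N * 2 := by omega
  have h1 : m * 2 + 1 < N * 2 := by omega
  rw [ediv _ h0, ediv _ h1, emod _ h0, emod _ h1, emod2, emod2,
    show (m * 2 + 0) / 2 = m from by omega, show (m * 2 + 1) / 2 = m from by omega]
  norm_num
  rw [relu_sub_min, relu_sub_min]
  ring

end
end P74

namespace P74

lemma abs_coord_le {d : ℕ} (x : EuclideanSpace ℝ (Fin d)) (i : Fin d) : |x i| ≤ ‖x‖ := by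
  rw [EuclideanSpace.norm_eq, ← Real.sqrt_sq (abs_nonneg (x i))]
  apply Real.sqrt_le_sqrt
  have h : |x i| ^ 2 = ‖x i‖ ^ 2 := by rw [Real.norm_eq_abs]
  rw [h]
  exact Finset.single_le_sum (f := fun j => ‖x j‖ ^ 2) (fun j _ => sq_nonneg _) (Finset.mem_univ i)

lemma sum_abs_le {d : ℕ} (z : EuclideanSpace ℝ (Fin d)) :
    ∑ i : Fin d, |z i| ≤ Real.sqrt d * ‖z‖ := by
  have hz : 0 ≤ ∑ i : Fin d, |z i| := Finset.sum_nonneg fun i _ => abs_nonneg _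
  rw [EuclideanSpace.norm_eq, ← Real.sqrt_mul (by positivity : (0:ℝ) ≤ (d:ℝ)), ← Real.sqrt_sq hz]
  apply Real.sqrt_le_sqrt
  have h1 := Finset.sum_mul_sq_le_sq_mul_sq Finset.univ (fun _ : Fin d => (1:ℝ)) (fun i => |z i|)
  simpa [Real.norm_eq_abs, sq_abs] using h1

end P74

namespace P74

lemma rpow_expand {Kv dv ε p : ℝ} (hK : 0 < Kv) (hd : 0 < dv) (hε : 0 < ε) :
    (2 * Kv * dv / ε) ^ (p - 1)
      = 2 ^ (p-1) * Kv ^ (p-1) * dv ^ (p-1) * (ε ^ (p-1))⁻¹ := by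
  rw [div_eq_mul_inv, Real.mul_rpow (by positivity) (by positivity),
      Real.mul_rpow (by positivity) (by positivity),
      Real.mul_rpow (by norm_num) (by positivity), Real.inv_rpow hε.le]

lemma pow_collect {Kv dv ε p : ℝ} (hK : 0 < Kv) (hd : 0 < dv) (hε : 0 < ε) :
    55 * dv ^ (3:ℕ) * Kv * ((2 * Kv * dv / ε) ^ (p - 1)) / ε
      = 55 * 2 ^ (p-1) * Kv ^ p * dv ^ (p + 2) * ε ^ (-p) := by
  have eK : Kv * Kv ^ (p-1) = Kv ^ p := by
    have h := Real.rpow_add hK 1 (p-1)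
    rw [Real.rpow_one] at h
    rw [← h]; norm_num
  have ed : dv ^ (3:ℕ) * dv ^ (p-1) = dv ^ (p+2) := by
    have h3 : dv ^ (3:ℕ) = dv ^ ((3:ℝ)) := by
      rw [← Real.rpow_natCast dv 3]; norm_num
    rw [h3, ← Real.rpow_add hd, show (3:ℝ) + (p-1) = p + 2 by ring]
  have eε : (ε ^ (p-1))⁻¹ * ε⁻¹ = ε ^ (-p) := by
    have h := Real.rpow_add hε (-(p-1)) (-1)
    rw [Real.rpow_neg hε.le (p-1), Real.rpow_neg hε.le 1, Real.rpow_one] at h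
    rw [← h]; ring_nf
  rw [rpow_expand hK hd hε, div_eq_mul_inv, ← eK, ← ed, ← eε]; ring

end P74

set_option maxHeartbeats 2000000
open P74

/-- Proposition 7.4: sums of one-dimensional Lipschitz functions can be
approximated by ReLU networks on all of `ℝ^d` with respect to the weight
function `(1 + ‖x‖^q)⁻¹`, without the curse of dimensionality. -/
theorem sum_of_lipschitz_approximation_unbounded (q K : ℝ) (hq : 1 < q) (hK : 1 ≤ K)
    (f : ℕ → ℝ → ℝ)
    (hLip : ∀ i : ℕ, ∀ x y : ℝ, |f i x - f i y| ≤ K * |x - y|)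
    (h0 : ∀ i : ℕ, |f i 0| ≤ K) :
    ∀ d : ℕ, 0 < d → ∀ ε : ℝ, 0 < ε → ε ≤ 1 →
      ∃ φ : NN, φ.l 0 = d ∧ φ.l φ.depth = 1 ∧
        (∀ x : EuclideanSpace ℝ (Fin d),
          (1 + ‖x‖ ^ q)⁻¹ * |(∑ i : Fin d, f i (x i)) - φ.realScalar ReLU d x| ≤ ε) ∧
        (∀ x y : EuclideanSpace ℝ (Fin d),
          |φ.realScalar ReLU d x - φ.realScalar ReLU d y| ≤ Real.sqrt d * K * ‖x - y‖) ∧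
        ((φ.P : ℝ) ≤ (2 / 9) * 10 ^ 3 *
            2 ^ (3 * (q / (q - 1)) * (q + 1)) * K ^ (2 * (q / (q - 1)) * (q + 1)) *
            (d : ℝ) ^ ((q / (q - 1)) * (q + 1) + 4) * ε ^ (-(q / (q - 1)))) := by
  intro d hd ε hε hε1
  have hq1 : (0:ℝ) < q - 1 := by linarith
  obtain ⟨p, hp⟩ : ∃ p : ℝ, p = q / (q - 1) := ⟨_, rfl⟩
  rw [show q / (q - 1) = p from hp.symm]
  have hp1 : 1 < p := by rw [hp]; exact (one_lt_div hq1).mpr (by linarith)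
  have hp0 : 0 < p := by linarith
  have hd1 : (1:ℝ) ≤ d := by exact_mod_cast hd
  have hd0 : (0:ℝ) < d := by linarith
  have hK0 : (0:ℝ) < K := by linarith
  have hbase1 : 1 ≤ 2 * K * (d:ℝ) / ε := by
    rw [le_div_iff₀ hε]
    nlinarith [mul_le_mul_of_nonneg_left hd1 (by linarith : (0:ℝ) ≤ K)]
  have hbase0 : (0:ℝ) < 2 * K * (d:ℝ) / ε := lt_of_lt_of_le one_pos hbase1
  obtain ⟨R, hR_def⟩ : ∃ R : ℝ, R = (2 * K * (d:ℝ) / ε) ^ (p - 1) := ⟨_, rfl⟩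
  have hR1 : 1 ≤ R := by
    rw [hR_def]
    calc (1:ℝ) = 1 ^ (p - 1) := (Real.one_rpow _).symm
    _ ≤ (2 * K * (d:ℝ) / ε) ^ (p-1) := Real.rpow_le_rpow zero_le_one hbase1 (by linarith)
  have hR0 : (0:ℝ) < R := lt_of_lt_of_le one_pos hR1
  have hRq : R ^ (q - 1) = 2 * K * (d:ℝ) / ε := by
    rw [hR_def, ← Real.rpow_mul hbase0.le,
      show (p - 1) * (q - 1) = 1 by rw [hp]; field_simp; ring,
      Real.rpow_one]
  have hpq : ∀ r : ℝ, 0 < r → r ≤ 1 → True := fun _ _ _ => trivial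
  obtain ⟨N, hN_def⟩ : ∃ N : ℕ, N = ⌈8 * (d:ℝ) * K * R / ε⌉₊ := ⟨_, rfl⟩
  have hNv0 : (0:ℝ) < 8 * (d:ℝ) * K * R / ε := by positivity
  have hN0 : 0 < N := by rw [hN_def]; exact Nat.ceil_pos.mpr hNv0
  have hN1 : 1 ≤ N := hN0
  have hNge : 8 * (d:ℝ) * K * R / ε ≤ (N:ℝ) := by rw [hN_def]; exact Nat.le_ceil _
  have hNpos : (0:ℝ) < N := by exact_mod_cast hN0
  have hNle : (N:ℝ) ≤ 9 * (d:ℝ) * K * R / ε := by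
    have h1 : (N:ℝ) < 8 * (d:ℝ) * K * R / ε + 1 := by
      rw [hN_def]; exact Nat.ceil_lt_add_one hNv0.le
    have h2 : 1 ≤ (d:ℝ) * K * R / ε := by
      rw [le_div_iff₀ hε]
      nlinarith [mul_le_mul_of_nonneg_left hd1 (by linarith : (0:ℝ) ≤ K),
        mul_le_mul_of_nonneg_left hR1 (by positivity : (0:ℝ) ≤ (d:ℝ) * K)]
    have h3 : 8 * (d:ℝ) * K * R / ε + (d:ℝ) * K * R / ε = 9 * (d:ℝ) * K * R / ε := by ring
    linarith
  have htr : ∀ (x : EuclideanSpace ℝ (Fin d)) (i : Fin d),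
      trunc d (emb d x) (i : ℕ) = x i := by
    intro x i; simp [trunc, emb, i.isLt]
  have hreal : ∀ x : EuclideanSpace ℝ (Fin d),
      (net d N
        (fun j => (if j % 2 = 0 then (1:ℝ) else -1) * s (f (j / (2 * N))) R N (j % (2 * N) / 2))
        (fun j => g R N (j % (2 * N) / 2 + j % 2))
        (∑ k ∈ Finset.range d, f k (-R))).realScalar ReLU d x
      = ∑ k ∈ Finset.range d, F (f k) R N (trunc d (emb d x) k) := by
    intro x
    show (net d N _ _ _).fullReal ReLU (emb d x) 0 = _
    rw [net_real hN0, net_sum_eq hN0 f R d (trunc d (emb d x)), Finset.sum_sub_distrib]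
    ring
  refine ⟨net d N
      (fun j => (if j % 2 = 0 then (1:ℝ) else -1) * s (f (j / (2 * N))) R N (j % (2 * N) / 2))
      (fun j => g R N (j % (2 * N) / 2 + j % 2))
      (∑ k ∈ Finset.range d, f k (-R)), rfl, rfl, ?_, ?_, ?_⟩
  · -- approximation bound
    intro x
    have hWnn : (0:ℝ) ≤ ‖x‖ ^ q := Real.rpow_nonneg (norm_nonneg x) q
    have hWpos : (0:ℝ) < 1 + ‖x‖ ^ q := by linarith
    rw [hreal x, inv_mul_le_iff₀ hWpos]
    have hsum_eq : ∑ i : Fin d, f i (x i)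
        = ∑ k ∈ Finset.range d, f k (trunc d (emb d x) k) := by
      rw [← Fin.sum_univ_eq_sum_range (fun k => f k (trunc d (emb d x) k)) d]
      exact Finset.sum_congr rfl fun i _ => by rw [htr x i]
    rw [hsum_eq]
    have hEk : ∀ k ∈ Finset.range d,
        |f k (trunc d (emb d x) k) - F (f k) R N (trunc d (emb d x) k)|
          ≤ 2 * K * (2 * R / N) + K * max (‖x‖ - R) 0 := by
      intro k hk
      rw [Finset.mem_range] at hk
      rw [abs_sub_comm]
      refine (F_approx hR0 hN1 (hLip k) _).trans ?_
      have h1 : |trunc d (emb d x) k| ≤ ‖x‖ := by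
        rw [show trunc d (emb d x) k = x ⟨k, hk⟩ from htr x ⟨k, hk⟩]
        exact abs_coord_le x _
      have h2 : max (|trunc d (emb d x) k| - R) 0 ≤ max (‖x‖ - R) 0 :=
        max_le_max (by linarith) le_rfl
      have := mul_le_mul_of_nonneg_left h2 hK0.le
      linarith
    have hE : |∑ k ∈ Finset.range d, f k (trunc d (emb d x) k)
          - ∑ k ∈ Finset.range d, F (f k) R N (trunc d (emb d x) k)|
        ≤ (d:ℝ) * (2 * K * (2 * R / N)) + (d:ℝ) * (K * max (‖x‖ - R) 0) := by
      rw [← Finset.sum_sub_distrib]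
      refine (Finset.abs_sum_le_sum_abs _ _).trans ?_
      refine (Finset.sum_le_sum hEk).trans ?_
      rw [Finset.sum_const, Finset.card_range, nsmul_eq_mul]
      exact le_of_eq (by ring)
    have key1 : (d:ℝ) * (2 * K * (2 * R / N)) ≤ ε / 2 := by
      rw [show ((d:ℝ) * (2 * K * (2 * R / N)) : ℝ) = 4 * (d:ℝ) * K * R / N by ring,
        div_le_iff₀ hNpos]
      have h4 := (div_le_iff₀ hε).mp hNge
      nlinarith
    have key2 : (d:ℝ) * (K * max (‖x‖ - R) 0) ≤ ε / 2 * (1 + ‖x‖ ^ q) := by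
      rcases le_or_gt ‖x‖ R with hc | hc
      · rw [max_eq_right (by linarith)]
        have hpos : (0:ℝ) ≤ ε / 2 * (1 + ‖x‖ ^ q) := by positivity
        simpa using hpos
      · rw [max_eq_left (by linarith)]
        have hWx : (0:ℝ) < ‖x‖ := by linarith
        have e1 : ‖x‖ ^ q = ‖x‖ ^ ((1:ℝ) + (q - 1)) := by norm_num
        rw [Real.rpow_add hWx, Real.rpow_one] at e1
        have e2 : 2 * K * (d:ℝ) / ε ≤ ‖x‖ ^ (q - 1) := by
          rw [← hRq]
          exact Real.rpow_le_rpow hR0.le hc.le (by linarith)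
        have e3 : K * (d:ℝ) * ‖x‖ = ε / 2 * (‖x‖ * (2 * K * (d:ℝ) / ε)) := by
          field_simp
        have e4 : ‖x‖ * (2 * K * (d:ℝ) / ε) ≤ ‖x‖ * ‖x‖ ^ (q - 1) :=
          mul_le_mul_of_nonneg_left e2 hWx.le
        have e5 : ε / 2 * (‖x‖ * (2 * K * (d:ℝ) / ε)) ≤ ε / 2 * (‖x‖ * ‖x‖ ^ (q - 1)) :=
          mul_le_mul_of_nonneg_left e4 (by linarith)
        calc (d:ℝ) * (K * (‖x‖ - R)) ≤ K * (d:ℝ) * ‖x‖ := by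
              nlinarith [mul_pos (mul_pos hd0 hK0) hR0]
          _ = ε / 2 * (‖x‖ * (2 * K * (d:ℝ) / ε)) := e3
          _ ≤ ε / 2 * (‖x‖ * ‖x‖ ^ (q - 1)) := e5
          _ = ε / 2 * ‖x‖ ^ q := by rw [← e1]
          _ ≤ ε / 2 * (1 + ‖x‖ ^ q) := by nlinarith
    have h6 : ε / 2 ≤ ε / 2 * (1 + ‖x‖ ^ q) := by nlinarith
    calc |∑ k ∈ Finset.range d, f k (trunc d (emb d x) k)
          - ∑ k ∈ Finset.range d, F (f k) R N (trunc d (emb d x) k)|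
        ≤ (d:ℝ) * (2 * K * (2 * R / N)) + (d:ℝ) * (K * max (‖x‖ - R) 0) := hE
      _ ≤ ε / 2 * (1 + ‖x‖ ^ q) + ε / 2 * (1 + ‖x‖ ^ q) := by linarith
      _ = ε * (1 + ‖x‖ ^ q) := by ring
      _ = (1 + ‖x‖ ^ q) * ε := by ring
  · -- Lipschitz bound
    intro x z
    rw [hreal x, hreal z, ← Finset.sum_sub_distrib]
    refine (Finset.abs_sum_le_sum_abs _ _).trans ?_
    have h1 : ∀ k ∈ Finset.range d,
        |F (f k) R N (trunc d (emb d x) k) - F (f k) R N (trunc d (emb d z) k)|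
          ≤ K * |trunc d (emb d x) k - trunc d (emb d z) k| :=
      fun k _ => F_lip hR0 hN1 (hLip k) _ _
    refine (Finset.sum_le_sum h1).trans ?_
    rw [← Finset.mul_sum]
    have h2 : ∑ k ∈ Finset.range d, |trunc d (emb d x) k - trunc d (emb d z) k|
        ≤ Real.sqrt d * ‖x - z‖ := by
      rw [← Fin.sum_univ_eq_sum_range
        (fun k => |trunc d (emb d x) k - trunc d (emb d z) k|) d]
      refine le_trans (le_of_eq ?_) (sum_abs_le (x - z))
      refine Finset.sum_congr rfl fun i _ => ?_
      rw [htr x i, htr z i]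
      congr 1
    calc K * ∑ k ∈ Finset.range d, |trunc d (emb d x) k - trunc d (emb d z) k|
        ≤ K * (Real.sqrt d * ‖x - z‖) := mul_le_mul_of_nonneg_left h2 hK0.le
      _ = Real.sqrt d * K * ‖x - z‖ := by ring
  · -- parameter bound
    rw [net_P]
    have hP1 : ((d * (2 * N) * (d + 1) + (d * (2 * N) + 1) : ℕ) : ℝ)
        = 2 * (d:ℝ) * N * ((d:ℝ) + 1) + (2 * (d:ℝ) * N + 1) := by push_cast; ring
    rw [hP1]
    have step1 : 2 * (d:ℝ) * N * ((d:ℝ) + 1) + (2 * (d:ℝ) * N + 1)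
        ≤ 6 * (d:ℝ) ^ (2:ℕ) * N + 1 := by
      nlinarith [mul_nonneg (mul_nonneg hd0.le (sub_nonneg.mpr hd1)) hNpos.le]
    have step2 : 6 * (d:ℝ) ^ (2:ℕ) * (N:ℝ) ≤ 54 * (d:ℝ) ^ (3:ℕ) * K * R / ε := by
      have := mul_le_mul_of_nonneg_left hNle (by positivity : (0:ℝ) ≤ 6 * (d:ℝ) ^ (2:ℕ))
      calc 6 * (d:ℝ) ^ (2:ℕ) * (N:ℝ) ≤ 6 * (d:ℝ) ^ (2:ℕ) * (9 * (d:ℝ) * K * R / ε) := this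
        _ = 54 * (d:ℝ) ^ (3:ℕ) * K * R / ε := by ring
    have step3 : 54 * (d:ℝ) ^ (3:ℕ) * K * R / ε + 1 ≤ 55 * (d:ℝ) ^ (3:ℕ) * K * R / ε := by
      have h1 : 1 ≤ (d:ℝ) ^ (3:ℕ) * K * R / ε := by
        rw [le_div_iff₀ hε]
        have hd3 : (1:ℝ) ≤ (d:ℝ) ^ (3:ℕ) := one_le_pow₀ hd1
        nlinarith [mul_le_mul_of_nonneg_left hK (by linarith : (0:ℝ) ≤ (d:ℝ) ^ (3:ℕ)),
          mul_le_mul_of_nonneg_left hR1 (by positivity : (0:ℝ) ≤ (d:ℝ) ^ (3:ℕ) * K)]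
      have : 54 * (d:ℝ) ^ (3:ℕ) * K * R / ε + (d:ℝ) ^ (3:ℕ) * K * R / ε
          = 55 * (d:ℝ) ^ (3:ℕ) * K * R / ε := by ring
      linarith
    have hcollect : 55 * (d:ℝ) ^ (3:ℕ) * K * R / ε
        = 55 * 2 ^ (p - 1) * K ^ p * (d:ℝ) ^ (p + 2) * ε ^ (-p) := by
      rw [hR_def]; exact pow_collect hK0 hd0 hε
    have hfinal : 55 * 2 ^ (p - 1) * K ^ p * (d:ℝ) ^ (p + 2) * ε ^ (-p)
        ≤ (2 / 9) * 10 ^ 3 * 2 ^ (3 * p * (q + 1)) * K ^ (2 * p * (q + 1))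
          * (d:ℝ) ^ (p * (q + 1) + 4) * ε ^ (-p) := by
      have f1 : (2:ℝ) ^ (p - 1) ≤ 2 ^ (3 * p * (q + 1)) :=
        Real.rpow_le_rpow_of_exponent_le one_le_two (by nlinarith)
      have f2 : K ^ p ≤ K ^ (2 * p * (q + 1)) :=
        Real.rpow_le_rpow_of_exponent_le hK (by nlinarith)
      have f3 : (d:ℝ) ^ (p + 2) ≤ (d:ℝ) ^ (p * (q + 1) + 4) :=
        Real.rpow_le_rpow_of_exponent_le hd1 (by nlinarith)
      have hεp : (0:ℝ) ≤ ε ^ (-p) := Real.rpow_nonneg hε.le _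
      have c1 : (55:ℝ) ≤ (2 / 9) * 10 ^ 3 := by norm_num
      gcongr
      all_goals positivity
    linarith
end
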